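/- Let a ∈ ℂ and let I ⊆ F be the two-sided ideal generated by the three elements x₂x₁ − x₁x₂ − x₁², x₃x₁ − x₁x₃ − x₁x₂, and x₃x₂ − x₂x₃ − x₂² + x₁x₃ + x₁x₂ − a x₁². Then the images in F/I of the monomials x₁^{a₁} x₂^{a₂} x₃^{a₃}, over all a₁, a₂, a₃ ∈ ℕ, form a ℂ-basis of F/I. (This quotient is the Nichols algebra associated to the braiding of type R_{1,9} with t = 1 and b = 1; it has Gelfand–Kirillov dimension 3.) -/

import Mathlib

/-- The free associative unital `ℂ`-algebra on three generators. -/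
abbrev F : Type := FreeAlgebra ℂ (Fin 3)

/-- The generators `x₁ = X 0`, `x₂ = X 1`, `x₃ = X 2`. -/
noncomputable def X (i : Fin 3) : F := FreeAlgebra.ι ℂ i

/-- Generators: `x₂x₁ − x₁x₂ − x₁²`, `x₃x₁ − x₁x₃ − x₁x₂`, `x₃x₂ − x₂x₃ − x₂² + x₁x₃ + x₁x₂ − a x₁²`. -/
noncomputable def S (a : ℂ) : Set F :=
  {X 1 * X 0 - X 0 * X 1 - X 0 * X 0,
   X 2 * X 0 - X 0 * X 2 - X 0 * X 1,
   X 2 * X 1 - X 1 * X 2 - X 1 * X 1 + X 0 * X 2 + X 0 * X 1 - a • (X 0 * X 0)}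

/-- The relation whose two-sided-ideal closure is the ideal generated by `S`;
`RingQuot rel` is the quotient `F/I`. -/
def rel (a : ℂ) : F → F → Prop := fun x y => x ∈ S a ∧ y = 0

noncomputable section Aux
namespace R19

/-- The polynomial module on which we represent the algebra. -/
abbrev V : Type := MvPolynomial (Fin 3) ℂ

def vX (i : Fin 3) : V := MvPolynomial.X i

def Dt : V →ₗ[ℂ] V := (MvPolynomial.pderiv 0).toLinearMap
def Ds : V →ₗ[ℂ] V := (MvPolynomial.pderiv 1).toLinearMap

lemma Dt_apply (p : V) : Dt p = MvPolynomial.pderiv 0 p := rfl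
lemma Ds_apply (p : V) : Ds p = MvPolynomial.pderiv 1 p := rfl

def B1 : V →ₗ[ℂ] V := LinearMap.mulLeft ℂ (vX 0)
def B2 : V →ₗ[ℂ] V := LinearMap.mulLeft ℂ (vX 0 + vX 1 * vX 0) + (LinearMap.mulLeft ℂ (vX 0 * vX 0)) ∘ₗ Dt
def B3 (a : ℂ) : V →ₗ[ℂ] V :=
  LinearMap.mulLeft ℂ (vX 1 * vX 0 + vX 2 * vX 0)
    + (LinearMap.mulLeft ℂ (vX 1 * (vX 0 * vX 0) + vX 0 * vX 0)) ∘ₗ Dt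
    + (2⁻¹ : ℂ) • ((LinearMap.mulLeft ℂ (vX 0 * vX 0 * vX 0)) ∘ₗ Dt ∘ₗ Dt)
    + (LinearMap.mulLeft ℂ (MvPolynomial.C a * vX 0)) ∘ₗ Ds

lemma pd_comm (i j : Fin 3) (p : V) :
    MvPolynomial.pderiv i (MvPolynomial.pderiv j p) =
      MvPolynomial.pderiv j (MvPolynomial.pderiv i p) := by
  induction p using MvPolynomial.induction_on with
  | C c => simp
  | add p q hp hq => simp [hp, hq]
  | mul_X p n hp =>
    classical
    simp only [MvPolynomial.pderiv_mul, MvPolynomial.pderiv_X, Pi.single_apply, hp]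
    split_ifs <;> simp_all [Pi.single_apply] <;> ring

lemma rel1 : B2 * B1 = B1 * B2 + B1 * B1 := by
  apply LinearMap.ext; intro p
  simp only [B1, B2, vX, LinearMap.add_apply, Module.End.mul_apply, LinearMap.comp_apply,
    LinearMap.mulLeft_apply, Dt_apply, MvPolynomial.pderiv_mul, MvPolynomial.pderiv_X_self,
    map_add]
  ring

lemma rel2 (a : ℂ) : B3 a * B1 = B1 * B3 a + B1 * B2 := by
  apply LinearMap.ext; intro p
  refine smul_right_injective V (two_ne_zero' ℂ) ?_
  show (2:ℂ) • _ = (2:ℂ) • _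
  simp only [B1, B2, B3, vX, LinearMap.add_apply, Module.End.mul_apply, LinearMap.comp_apply,
    LinearMap.mulLeft_apply, LinearMap.smul_apply, Dt_apply, Ds_apply,
    MvPolynomial.pderiv_mul, MvPolynomial.pderiv_X_self, map_add, map_smul,
    MvPolynomial.pderiv_X_of_ne (show (0:Fin 3) ≠ 1 by decide), MvPolynomial.pderiv_C,
    smul_add, mul_add, add_mul, mul_smul_comm, smul_smul, mul_zero, zero_mul, one_mul,
    mul_one, map_zero]
  rw [show ((2:ℂ) * 2⁻¹) = 1 by norm_num]
  simp only [one_smul, two_smul]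
  ring

lemma rel3 (a : ℂ) : B3 a * B2 + B1 * B3 a + B1 * B2 = B2 * B3 a + B2 * B2 + a • (B1 * B1) := by
  apply LinearMap.ext; intro p
  refine smul_right_injective V (two_ne_zero' ℂ) ?_
  show (2:ℂ) • _ = (2:ℂ) • _
  simp only [B1, B2, B3, vX, LinearMap.add_apply, Module.End.mul_apply, LinearMap.comp_apply,
    LinearMap.mulLeft_apply, LinearMap.smul_apply, Dt_apply, Ds_apply,
    MvPolynomial.pderiv_mul, MvPolynomial.pderiv_X_self, map_add, map_smul,
    MvPolynomial.pderiv_X_of_ne (show (0:Fin 3) ≠ 1 by decide),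
    MvPolynomial.pderiv_X_of_ne (show (1:Fin 3) ≠ 0 by decide),
    MvPolynomial.pderiv_X_of_ne (show (2:Fin 3) ≠ 0 by decide),
    MvPolynomial.pderiv_X_of_ne (show (2:Fin 3) ≠ 1 by decide),
    MvPolynomial.pderiv_C, MvPolynomial.pderiv_C_mul,
    smul_add, mul_add, add_mul, mul_smul_comm, smul_smul, mul_zero, zero_mul, one_mul,
    mul_one, map_zero, zero_add, add_zero]
  rw [show ((2:ℂ) * 2⁻¹) = 1 by norm_num]
  simp only [one_smul, mul_smul, two_smul, MvPolynomial.smul_eq_C_mul]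
  rw [pd_comm 1 0]
  ring

/-- The representation of the free algebra. -/
def rep (a : ℂ) : F →ₐ[ℂ] Module.End ℂ V := FreeAlgebra.lift ℂ ![B1, B2, B3 a]

lemma rep_X0 (a : ℂ) : rep a (X 0) = B1 := by
  simp [rep, X, FreeAlgebra.lift_ι_apply]
lemma rep_X1 (a : ℂ) : rep a (X 1) = B2 := by
  simp [rep, X, FreeAlgebra.lift_ι_apply]
lemma rep_X2 (a : ℂ) : rep a (X 2) = B3 a := by
  simp [rep, X, FreeAlgebra.lift_ι_apply]

lemma rep_S (a : ℂ) : ∀ g ∈ S a, rep a g = 0 := by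
  intro g hg
  rcases hg with h | h | h <;> subst h <;>
    simp only [map_sub, map_add, map_mul, map_smul, rep_X0, rep_X1, rep_X2]
  · rw [rel1]; abel
  · rw [rel2]; abel
  · have := rel3 a
    rw [sub_eq_zero]
    linear_combination (norm := abel) this

/-- The representation of the quotient. -/
def quotRep (a : ℂ) : RingQuot (rel a) →ₐ[ℂ] Module.End ℂ V :=
  RingQuot.liftAlgHom ℂ ⟨rep a, by
    rintro x y ⟨hx, rfl⟩
    rw [rep_S a x hx, map_zero]⟩

lemma quotRep_mk (a : ℂ) (f : F) :
    quotRep a (RingQuot.mkAlgHom ℂ (rel a) f) = rep a f := by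
  simp [quotRep, RingQuot.liftAlgHom_mkAlgHom_apply]


open Finsupp in
lemma X_mul_mono (n : Fin 3) (μ : Fin 3 →₀ ℕ) (c : ℂ) :
    vX n * MvPolynomial.monomial μ c = MvPolynomial.monomial (single n 1 + μ) c := by
  rw [vX, ← pow_one (MvPolynomial.X n), ← MvPolynomial.monomial_single_add]

open Finsupp MvPolynomial in
lemma B1_mono (μ : Fin 3 →₀ ℕ) (c : ℂ) :
    B1 (monomial μ c) = monomial (single 0 1 + μ) c := by
  rw [B1, LinearMap.mulLeft_apply, X_mul_mono]

open Finsupp MvPolynomial in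
lemma B2_mono (μ : Fin 3 →₀ ℕ) (c : ℂ) :
    B2 (monomial μ c) = monomial (single 0 1 + μ) c
      + monomial (single 1 1 + (single 0 1 + μ)) c
      + monomial (single 0 1 + (single 0 1 + (μ - single 0 1))) (c * μ 0) := by
  simp only [B2, LinearMap.add_apply, LinearMap.comp_apply, LinearMap.mulLeft_apply,
    Dt_apply, pderiv_monomial, add_mul, mul_assoc, X_mul_mono]

open Finsupp MvPolynomial in
lemma B3_mono (a : ℂ) (μ : Fin 3 →₀ ℕ) (c : ℂ) :
    B3 a (monomial μ c) = monomial (single 1 1 + (single 0 1 + μ)) c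
      + monomial (single 2 1 + (single 0 1 + μ)) c
      + monomial (single 1 1 + (single 0 1 + (single 0 1 + (μ - single 0 1)))) (c * μ 0)
      + monomial (single 0 1 + (single 0 1 + (μ - single 0 1))) (c * μ 0)
      + monomial (single 0 1 + (single 0 1 + (single 0 1 + (μ - single 0 1 - single 0 1))))
          (2⁻¹ * (c * ((μ 0 : ℂ) * ((μ 0 - 1 : ℕ) : ℂ))))
      + monomial (single 0 1 + (μ - single 1 1)) (a * (c * μ 1)) := by
  simp only [B3, LinearMap.add_apply, LinearMap.comp_apply, LinearMap.mulLeft_apply,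
    LinearMap.smul_apply, Dt_apply, Ds_apply, pderiv_monomial, add_mul, mul_assoc,
    X_mul_mono, C_mul_monomial, MvPolynomial.smul_monomial, Finsupp.tsub_apply,
    Finsupp.single_eq_same, smul_eq_mul]
  abel

open Finsupp MvPolynomial

def lco (j k : ℕ) (μ : Fin 3 →₀ ℕ) : Prop := μ 2 < k ∨ (μ 2 = k ∧ μ 1 < j)

def Lo (j k : ℕ) : Submodule ℂ V :=
  Submodule.span ℂ {q : V | ∃ μ, lco j k μ ∧ q = monomial μ 1}

lemma mono_mem {j k : ℕ} {μ : Fin 3 →₀ ℕ} (h : lco j k μ) (c : ℂ) :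
    (monomial μ c : V) ∈ Lo j k := by
  have hc : (monomial μ c : V) = c • monomial μ 1 := by rw [MvPolynomial.smul_monomial, smul_eq_mul, mul_one]
  rw [hc]
  exact Submodule.smul_mem _ _ (Submodule.subset_span ⟨μ, h, rfl⟩)

lemma B1_mem {j k : ℕ} {q : V} (h : q ∈ Lo j k) : B1 q ∈ Lo j k := by
  induction h using Submodule.span_induction with
  | mem x hx =>
    obtain ⟨μ, hμ, rfl⟩ := hx
    rw [B1_mono]
    refine mono_mem ?_ _
    rcases hμ with h | h
    · left; simpa [Finsupp.add_apply, Finsupp.single_apply] using h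
    · right; simpa [Finsupp.add_apply, Finsupp.single_apply] using h
  | zero => simp [Submodule.zero_mem]
  | add x y hx hy ihx ihy => rw [map_add]; exact Submodule.add_mem _ ihx ihy
  | smul c x hx ihx => rw [map_smul]; exact Submodule.smul_mem _ _ ihx

lemma B2_mem {j k : ℕ} {q : V} (h : q ∈ Lo j k) : B2 q ∈ Lo (j + 1) k := by
  induction h using Submodule.span_induction with
  | mem x hx =>
    obtain ⟨μ, hμ, rfl⟩ := hx
    rw [B2_mono]
    refine Submodule.add_mem _ (Submodule.add_mem _ (mono_mem ?_ _) (mono_mem ?_ _)) (mono_mem ?_ _) <;>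
    · rcases hμ with h | h
      · left; simpa [Finsupp.add_apply, Finsupp.tsub_apply, Finsupp.single_apply] using h
      · right
        constructor
        · simpa [Finsupp.add_apply, Finsupp.tsub_apply, Finsupp.single_apply] using h.1
        · simp only [Finsupp.add_apply, Finsupp.tsub_apply, Finsupp.single_apply]
          simp
          omega
  | zero => simp [Submodule.zero_mem]
  | add x y hx hy ihx ihy => rw [map_add]; exact Submodule.add_mem _ ihx ihy
  | smul c x hx ihx => rw [map_smul]; exact Submodule.smul_mem _ _ ihx

lemma B3_mem (a : ℂ) {k : ℕ} {q : V} (h : q ∈ Lo 0 k) : B3 a q ∈ Lo 0 (k + 1) := by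
  induction h using Submodule.span_induction with
  | mem x hx =>
    obtain ⟨μ, hμ, rfl⟩ := hx
    have hk : μ 2 < k := by unfold lco at hμ; omega
    rw [B3_mono]
    refine Submodule.add_mem _ (Submodule.add_mem _ (Submodule.add_mem _ (Submodule.add_mem _
      (Submodule.add_mem _ (mono_mem ?_ _) (mono_mem ?_ _)) (mono_mem ?_ _)) (mono_mem ?_ _))
      (mono_mem ?_ _)) (mono_mem ?_ _) <;>
    · left
      simp only [Finsupp.add_apply, Finsupp.tsub_apply, Finsupp.single_apply]
      simp
      omega
  | zero => simp [Submodule.zero_mem]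
  | add x y hx hy ihx ihy => rw [map_add]; exact Submodule.add_mem _ ihx ihy
  | smul c x hx ihx => rw [map_smul]; exact Submodule.smul_mem _ _ ihx

def texp (i j k : ℕ) : Fin 3 →₀ ℕ := single 0 i + single 1 j + single 2 k

lemma texp_apply0 (i j k : ℕ) : texp i j k 0 = i := by
  simp [texp, Finsupp.add_apply, Finsupp.single_apply]
lemma texp_apply1 (i j k : ℕ) : texp i j k 1 = j := by
  simp [texp, Finsupp.add_apply, Finsupp.single_apply]
lemma texp_apply2 (i j k : ℕ) : texp i j k 2 = k := by
  simp [texp, Finsupp.add_apply, Finsupp.single_apply]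

lemma top1 (i j k : ℕ) :
    B1 (monomial (texp i j k) 1) = monomial (texp (i + 1) j k) 1 := by
  rw [B1_mono]
  congr 1
  rw [texp, texp, show i + 1 = 1 + i by omega, Finsupp.single_add]
  abel

lemma top2 (m j k : ℕ) : ∃ E ∈ Lo (j + 1) k,
    B2 (monomial (texp m j k) 1) = monomial (texp (m + 1) (j + 1) k) 1 + E := by
  refine ⟨monomial (single 0 1 + texp m j k) 1
      + monomial (single 0 1 + (single 0 1 + (texp m j k - single 0 1))) ((1:ℂ) * ((texp m j k) 0 : ℕ)),
    Submodule.add_mem _ (mono_mem ?_ _) (mono_mem ?_ _), ?_⟩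
  · right
    simp [Finsupp.add_apply, Finsupp.single_apply, texp_apply1, texp_apply2]
  · right
    simp [Finsupp.add_apply, Finsupp.tsub_apply, Finsupp.single_apply, texp_apply1, texp_apply2]
  · rw [B2_mono]
    have : single (1:Fin 3) 1 + (single 0 1 + texp m j k) = texp (m + 1) (j + 1) k := by
      rw [texp, texp, show m + 1 = 1 + m by omega, show j + 1 = 1 + j by omega,
        Finsupp.single_add, Finsupp.single_add]
      abel
    rw [this]
    abel

lemma top3 (a : ℂ) (k : ℕ) : ∃ E ∈ Lo 0 (k + 1),
    B3 a (monomial (texp k 0 k) 1) = monomial (texp (k + 1) 0 (k + 1)) 1 + E := by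
  refine ⟨monomial (single 1 1 + (single 0 1 + texp k 0 k)) 1
      + monomial (single 1 1 + (single 0 1 + (single 0 1 + (texp k 0 k - single 0 1)))) ((1:ℂ) * ((texp k 0 k) 0 : ℕ))
      + monomial (single 0 1 + (single 0 1 + (texp k 0 k - single 0 1))) ((1:ℂ) * ((texp k 0 k) 0 : ℕ))
      + monomial (single 0 1 + (single 0 1 + (single 0 1 + (texp k 0 k - single 0 1 - single 0 1))))
          (2⁻¹ * ((1:ℂ) * (((texp k 0 k) 0 : ℕ) * (((texp k 0 k) 0 - 1 : ℕ) : ℂ))))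
      + monomial (single 0 1 + (texp k 0 k - single 1 1)) (a * ((1:ℂ) * ((texp k 0 k) 1 : ℕ))),
    Submodule.add_mem _ (Submodule.add_mem _ (Submodule.add_mem _ (Submodule.add_mem _
      (mono_mem ?_ _) (mono_mem ?_ _)) (mono_mem ?_ _)) (mono_mem ?_ _)) (mono_mem ?_ _), ?_⟩
  case refine_6 =>
    rw [B3_mono]
    have : single (2:Fin 3) 1 + (single 0 1 + texp k 0 k) = texp (k + 1) 0 (k + 1) := by
      rw [texp, texp, show k + 1 = 1 + k by omega, Finsupp.single_add, Finsupp.single_add]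
      abel
    rw [this]
    abel
  all_goals
    left
    simp [Finsupp.add_apply, Finsupp.tsub_apply, Finsupp.single_apply, texp_apply2]

lemma L3 (a : ℂ) (k : ℕ) : ∃ E ∈ Lo 0 k,
    ((B3 a) ^ k) 1 = monomial (texp k 0 k) 1 + E := by
  induction k with
  | zero =>
    refine ⟨0, Submodule.zero_mem _, ?_⟩
    simp [texp]
  | succ k ih =>
    obtain ⟨E, hE, hEq⟩ := ih
    obtain ⟨E', hE', hEq'⟩ := top3 a k
    refine ⟨E' + B3 a E, Submodule.add_mem _ hE' (B3_mem a hE), ?_⟩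
    rw [pow_succ', Module.End.mul_apply, hEq, map_add, hEq', add_assoc]

lemma L2 (a : ℂ) (j k : ℕ) : ∃ E ∈ Lo j k,
    (B2 ^ j) (((B3 a) ^ k) 1) = monomial (texp (j + k) j k) 1 + E := by
  induction j with
  | zero => simpa using L3 a k
  | succ j ih =>
    obtain ⟨E, hE, hEq⟩ := ih
    obtain ⟨E', hE', hEq'⟩ := top2 (j + k) j k
    refine ⟨E' + B2 E, Submodule.add_mem _ hE' (B2_mem hE), ?_⟩
    rw [pow_succ', Module.End.mul_apply, hEq, map_add, hEq', add_assoc,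
      show j + k + 1 = j + 1 + k by omega]

lemma L1 (a : ℂ) (i j k : ℕ) : ∃ E ∈ Lo j k,
    (B1 ^ i) ((B2 ^ j) (((B3 a) ^ k) 1)) = monomial (texp (i + j + k) j k) 1 + E := by
  induction i with
  | zero => simpa using L2 a j k
  | succ i ih =>
    obtain ⟨E, hE, hEq⟩ := ih
    refine ⟨B1 E, B1_mem hE, ?_⟩
    rw [pow_succ', Module.End.mul_apply, hEq, map_add, top1,
      show i + j + k + 1 = i + 1 + j + k by omega]

lemma coeff_Lo {j k : ℕ} {q : V} (h : q ∈ Lo j k) {ν : Fin 3 →₀ ℕ} (hν : ¬ lco j k ν) :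
    coeff ν q = 0 := by
  induction h using Submodule.span_induction with
  | mem x hx =>
    obtain ⟨μ, hμ, rfl⟩ := hx
    rw [coeff_monomial, if_neg]
    intro hc
    exact hν (hc ▸ hμ)
  | zero => simp
  | add x y hx hy ihx ihy => simp [ihx, ihy]
  | smul c x hx ihx => simp [ihx]

lemma texp_eq_iff {m j k m' j' k' : ℕ} :
    texp m j k = texp m' j' k' ↔ (m = m' ∧ j = j' ∧ k = k') := by
  constructor
  · intro h
    refine ⟨?_, ?_, ?_⟩
    · have := congrFun (congrArg (fun f : Fin 3 →₀ ℕ => (f : Fin 3 → ℕ)) h) 0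
      simpa [texp_apply0] using this
    · have := congrFun (congrArg (fun f : Fin 3 →₀ ℕ => (f : Fin 3 → ℕ)) h) 1
      simpa [texp_apply1] using this
    · have := congrFun (congrArg (fun f : Fin 3 →₀ ℕ => (f : Fin 3 → ℕ)) h) 2
      simpa [texp_apply2] using this
  · rintro ⟨rfl, rfl, rfl⟩; rfl

lemma indep (a : ℂ) : LinearIndependent ℂ
    (fun e : ℕ × ℕ × ℕ => ((B1 ^ e.1 * B2 ^ e.2.1 * (B3 a) ^ e.2.2 : Module.End ℂ V) 1 : V)) := by
  rw [linearIndependent_iff']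
  intro s g hsum e he
  by_contra hne
  set T := s.filter (fun e => g e ≠ 0) with hT
  have hTne : T.Nonempty := ⟨e, Finset.mem_filter.2 ⟨he, hne⟩⟩
  obtain ⟨e₀, he₀T, he₀max⟩ :=
    T.exists_max_image (fun e => toLex (e.2.2, e.2.1)) hTne
  have he₀s : e₀ ∈ s := (Finset.mem_filter.1 he₀T).1
  have hg₀ : g e₀ ≠ 0 := (Finset.mem_filter.1 he₀T).2
  obtain ⟨i₀, j₀, k₀⟩ := e₀
  set ν₀ : Fin 3 →₀ ℕ := texp (i₀ + j₀ + k₀) j₀ k₀ with hν₀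
  have hnl : ¬ lco j₀ k₀ ν₀ := by
    simp only [lco, hν₀, texp_apply1, texp_apply2]
    omega
  -- the value of each summand under coeff ν₀
  have hval : ∀ b ∈ s, b ≠ (i₀, j₀, k₀) →
      g b * coeff ν₀ ((B1 ^ b.1 * B2 ^ b.2.1 * (B3 a) ^ b.2.2 : Module.End ℂ V) 1) = 0 := by
    rintro ⟨i, j, k⟩ hb hbne
    by_cases hgb : g (i, j, k) = 0
    · rw [hgb, zero_mul]
    have hbT : (i, j, k) ∈ T := Finset.mem_filter.2 ⟨hb, hgb⟩
    have hle := he₀max _ hbT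
    rw [Prod.Lex.le_iff] at hle
    obtain ⟨E, hE, hEq⟩ := L1 a i j k
    have hv : ((B1 ^ i * B2 ^ j * (B3 a) ^ k : Module.End ℂ V) 1 : V)
        = monomial (texp (i + j + k) j k) 1 + E := by
      rw [← hEq]; rfl
    rw [hv, coeff_add]
    have hcE : coeff ν₀ E = 0 := by
      refine coeff_Lo hE ?_
      simp only [lco, hν₀, texp_apply1, texp_apply2]
      simp only [ofLex_toLex] at hle
      omega
    have hcm : coeff ν₀ (monomial (texp (i + j + k) j k) 1 : V) = 0 := by
      rw [coeff_monomial, if_neg]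
      intro hc
      rw [hν₀] at hc
      rw [texp_eq_iff] at hc
      exact hbne (by simp only [Prod.mk.injEq]; omega)
    rw [hcE, hcm, add_zero, mul_zero]
  -- sum reduces to the e₀ term
  have h0 := congrArg (coeff ν₀) hsum
  rw [coeff_sum] at h0
  simp only [coeff_smul, smul_eq_mul, map_zero] at h0
  rw [Finset.sum_eq_single_of_mem (i₀, j₀, k₀) he₀s hval] at h0
  obtain ⟨E, hE, hEq⟩ := L1 a i₀ j₀ k₀
  have hv : ((B1 ^ i₀ * B2 ^ j₀ * (B3 a) ^ k₀ : Module.End ℂ V) 1 : V)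
      = monomial (texp (i₀ + j₀ + k₀) j₀ k₀) 1 + E := by
    rw [← hEq]; rfl
  rw [hv, coeff_add, coeff_Lo hE hnl, coeff_monomial, if_pos rfl, add_zero, mul_one] at h0
  exact hg₀ h0


end R19
end Aux

noncomputable section Span
namespace R19S
variable (a : ℂ)

local notation "mk" => RingQuot.mkAlgHom ℂ (rel a)

def y (a : ℂ) (i : Fin 3) : RingQuot (rel a) := RingQuot.mkAlgHom ℂ (rel a) (X i)

def mon (a : ℂ) (e : ℕ × ℕ × ℕ) : RingQuot (rel a) :=
  y a 0 ^ e.1 * (y a 1 ^ e.2.1 * y a 2 ^ e.2.2)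

def M (a : ℂ) : Submodule ℂ (RingQuot (rel a)) := Submodule.span ℂ (Set.range (mon a))

lemma mk_S_zero {g : F} (hg : g ∈ S a) : mk g = 0 := by
  have h := RingQuot.mkAlgHom_rel ℂ (show rel a g 0 from ⟨hg, rfl⟩)
  rwa [map_zero] at h

lemma rel1 : y a 1 * y a 0 = y a 0 * y a 1 + y a 0 * y a 0 := by
  have h := mk_S_zero a (show _ ∈ S a from Set.mem_insert _ _)
  simp only [map_sub, map_mul] at h
  rw [sub_sub, sub_eq_zero] at h
  simpa [y] using h

lemma rel2 : y a 2 * y a 0 = y a 0 * y a 2 + y a 0 * y a 1 := by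
  have h := mk_S_zero a (show _ ∈ S a from Set.mem_insert_iff.2 (Or.inr (Set.mem_insert _ _)))
  simp only [map_sub, map_mul] at h
  rw [sub_sub, sub_eq_zero] at h
  simpa [y] using h

lemma rel3 : y a 2 * y a 1 =
    y a 1 * y a 2 + y a 1 * y a 1 - y a 0 * y a 2 - y a 0 * y a 1 + a • (y a 0 * y a 0) := by
  have h := mk_S_zero a (show _ ∈ S a from by
    right; right; exact Set.mem_singleton _)
  simp only [map_sub, map_add, map_mul, map_smul] at h
  rw [sub_eq_zero] at h
  have h' : mk (X 2) * mk (X 1) - (mk (X 1) * mk (X 2) + mk (X 1) * mk (X 1)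
      - mk (X 0) * mk (X 2) - mk (X 0) * mk (X 1) + a • (mk (X 0) * mk (X 0))) = 0 := by
    rw [sub_eq_zero]
    linear_combination (norm := abel) h
  rw [sub_eq_zero] at h'
  simpa [y] using h'

lemma mem0 (e : ℕ × ℕ × ℕ) : y a 0 * mon a e ∈ M a := by
  obtain ⟨i, j, k⟩ := e
  have h : mon a (i + 1, j, k) = y a 0 * mon a (i, j, k) := by
    simp only [mon, pow_succ', mul_assoc]
  rw [← h]
  exact Submodule.subset_span ⟨_, rfl⟩

lemma cl0 {v : RingQuot (rel a)} (hv : v ∈ M a) : y a 0 * v ∈ M a := by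
  induction hv using Submodule.span_induction with
  | mem x hx => obtain ⟨e, rfl⟩ := hx; exact mem0 a e
  | zero => simp [Submodule.zero_mem]
  | add x y hx hy ihx ihy => rw [mul_add]; exact Submodule.add_mem _ ihx ihy
  | smul c x hx ihx => rw [mul_smul_comm]; exact Submodule.smul_mem _ _ ihx

lemma mem1 (e : ℕ × ℕ × ℕ) : y a 1 * mon a e ∈ M a := by
  obtain ⟨i, j, k⟩ := e
  induction i with
  | zero =>
    have h : mon a (0, j + 1, k) = y a 1 * mon a (0, j, k) := by
      simp only [mon, pow_zero, one_mul, pow_succ', mul_assoc]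
    rw [← h]
    exact Submodule.subset_span ⟨_, rfl⟩
  | succ i ih =>
    have : y a 1 * mon a (i + 1, j, k)
        = y a 0 * (y a 1 * mon a (i, j, k)) + y a 0 * (y a 0 * mon a (i, j, k)) := by
      have h : mon a (i + 1, j, k) = y a 0 * mon a (i, j, k) := by
        simp only [mon, pow_succ']
        exact mul_assoc _ _ _
      rw [h, ← mul_assoc, rel1 a, add_mul, mul_assoc, mul_assoc]
    rw [this]
    exact Submodule.add_mem _ (cl0 a ih) (cl0 a (cl0 a (Submodule.subset_span ⟨_, rfl⟩)))

lemma cl1 {v : RingQuot (rel a)} (hv : v ∈ M a) : y a 1 * v ∈ M a := by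
  induction hv using Submodule.span_induction with
  | mem x hx => obtain ⟨e, rfl⟩ := hx; exact mem1 a e
  | zero => simp [Submodule.zero_mem]
  | add x y hx hy ihx ihy => rw [mul_add]; exact Submodule.add_mem _ ihx ihy
  | smul c x hx ihx => rw [mul_smul_comm]; exact Submodule.smul_mem _ _ ihx

lemma mem2 (e : ℕ × ℕ × ℕ) : y a 2 * mon a e ∈ M a := by
  obtain ⟨i, j, k⟩ := e
  induction i with
  | zero =>
    -- y2 * (y1^j * y2^k), induction on j
    induction j with
    | zero =>
      have h : mon a (0, 0, k + 1) = y a 2 * mon a (0, 0, k) := by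
        simp only [mon, pow_zero, one_mul, pow_succ', mul_assoc]
      rw [← h]
      exact Submodule.subset_span ⟨_, rfl⟩
    | succ j ihj =>
      have key : y a 2 * mon a (0, j + 1, k)
          = y a 1 * (y a 2 * mon a (0, j, k)) + y a 1 * (y a 1 * mon a (0, j, k))
            - y a 0 * (y a 2 * mon a (0, j, k)) - y a 0 * (y a 1 * mon a (0, j, k))
            + a • (y a 0 * (y a 0 * mon a (0, j, k))) := by
        have h : mon a (0, j + 1, k) = y a 1 * mon a (0, j, k) := by
          simp only [mon, pow_zero, one_mul, pow_succ']
          exact mul_assoc _ _ _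
        rw [h, ← mul_assoc, rel3 a]
        simp only [sub_mul, add_mul, smul_mul_assoc, mul_assoc]
      rw [key]
      refine Submodule.add_mem _ (Submodule.sub_mem _ (Submodule.sub_mem _
        (Submodule.add_mem _ ?_ ?_) ?_) ?_) ?_
      · exact cl1 a ihj
      · exact cl1 a (cl1 a (Submodule.subset_span ⟨_, rfl⟩))
      · exact cl0 a ihj
      · exact cl0 a (cl1 a (Submodule.subset_span ⟨_, rfl⟩))
      · exact Submodule.smul_mem _ _ (cl0 a (cl0 a (Submodule.subset_span ⟨_, rfl⟩)))
  | succ i ih =>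
    have : y a 2 * mon a (i + 1, j, k)
        = y a 0 * (y a 2 * mon a (i, j, k)) + y a 0 * (y a 1 * mon a (i, j, k)) := by
      have h : mon a (i + 1, j, k) = y a 0 * mon a (i, j, k) := by
        simp only [mon, pow_succ']
        exact mul_assoc _ _ _
      rw [h, ← mul_assoc, rel2 a, add_mul, mul_assoc, mul_assoc]
    rw [this]
    exact Submodule.add_mem _ (cl0 a ih) (cl0 a (cl1 a (Submodule.subset_span ⟨_, rfl⟩)))

lemma main_cl (f : F) : ∀ v ∈ M a, mk f * v ∈ M a := by
  induction f using FreeAlgebra.induction with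
  | grade0 r =>
    intro v hv
    rw [AlgHom.commutes, ← Algebra.smul_def]
    exact Submodule.smul_mem _ _ hv
  | grade1 x =>
    intro v hv
    induction hv using Submodule.span_induction with
    | mem w hw =>
      obtain ⟨e, rfl⟩ := hw
      fin_cases x
      · exact mem0 a e
      · exact mem1 a e
      · exact mem2 a e
    | zero => simp [Submodule.zero_mem]
    | add w₁ w₂ h₁ h₂ ih₁ ih₂ => rw [mul_add]; exact Submodule.add_mem _ ih₁ ih₂
    | smul c w hw ihw => rw [mul_smul_comm]; exact Submodule.smul_mem _ _ ihw
  | mul f g ihf ihg =>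
    intro v hv
    rw [map_mul, mul_assoc]
    exact ihf _ (ihg _ hv)
  | add f g ihf ihg =>
    intro v hv
    rw [map_add, add_mul]
    exact Submodule.add_mem _ (ihf _ hv) (ihg _ hv)

lemma span_top : M a = ⊤ := by
  rw [Submodule.eq_top_iff']
  intro q
  obtain ⟨f, rfl⟩ := RingQuot.mkAlgHom_surjective ℂ (rel a) q
  have h1 : (1 : RingQuot (rel a)) ∈ M a := by
    have : mon a (0, 0, 0) = 1 := by simp [mon]
    exact this ▸ Submodule.subset_span ⟨_, rfl⟩
  simpa using main_cl a f 1 h1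

end R19S
end Span


/-- the images in `F/I` of the monomials `x₁^{a₁} x₂^{a₂} x₃^{a₃}` form a `ℂ`-basis. -/
theorem basis_R19_t_one (a : ℂ) :
    LinearIndependent ℂ (fun e : ℕ × ℕ × ℕ =>
      RingQuot.mkAlgHom ℂ (rel a) (X 0 ^ e.1 * X 1 ^ e.2.1 * X 2 ^ e.2.2)) ∧
    Submodule.span ℂ (Set.range (fun e : ℕ × ℕ × ℕ =>
      RingQuot.mkAlgHom ℂ (rel a) (X 0 ^ e.1 * X 1 ^ e.2.1 * X 2 ^ e.2.2))) = ⊤ := by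
  constructor
  · -- linear independence via the representation
    refine LinearIndependent.of_comp
      ((LinearMap.applyₗ (1 : R19.V)).comp (R19.quotRep a).toLinearMap) ?_
    have hfun : ((LinearMap.applyₗ (1 : R19.V)).comp (R19.quotRep a).toLinearMap ∘ fun e : ℕ × ℕ × ℕ =>
        RingQuot.mkAlgHom ℂ (rel a) (X 0 ^ e.1 * X 1 ^ e.2.1 * X 2 ^ e.2.2))
        = fun e : ℕ × ℕ × ℕ =>
          ((R19.B1 ^ e.1 * R19.B2 ^ e.2.1 * (R19.B3 a) ^ e.2.2 : Module.End ℂ R19.V) 1 : R19.V) := by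
      funext e
      simp only [Function.comp_apply, LinearMap.coe_comp, LinearMap.applyₗ, LinearMap.flip_apply, LinearMap.id_apply, LinearMap.id_coe, id_eq,
        AlgHom.toLinearMap_apply, map_mul, map_pow, R19.quotRep_mk,
        R19.rep_X0, R19.rep_X1, R19.rep_X2]
      rfl
    rw [hfun]
    exact R19.indep a
  · -- spanning
    have hfun : (fun e : ℕ × ℕ × ℕ =>
        RingQuot.mkAlgHom ℂ (rel a) (X 0 ^ e.1 * X 1 ^ e.2.1 * X 2 ^ e.2.2))
        = R19S.mon a := by
      funext e
      simp only [map_mul, map_pow, R19S.mon, R19S.y, mul_assoc]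
    rw [hfun]
    exact R19S.span_top a
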